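/- Let P be the convex hull in ℝ^4 of the points r_j = (j/n, (j/n)², (j/n)³, [j ≥ k]) for j = 0,...,n, where 0 < k < n and [·] is the indicator. Then for 1 ≤ i ≤ k−2, the hyperplane through r_0, r_i, r_{i+1}, r_k is a supporting hyperplane of P, i.e., all other vertices r_x (x ∉ {0, i, i+1, k}) lie strictly on one side of it. -/
import Mathlib


open Finset

/-- For `1 ≤ i ≤ k-2`, the hyperplane through `r_0, r_i, r_{i+1}, r_k` supports the
prismatoid: all other vertices `r_x` lie strictly on one side. -/
theorem stmt16 (n k i : ℕ) (hn : 4 ≤ n) (hk0 : 0 < k) (hkn : k < n)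
    (hi1 : 1 ≤ i) (hik : i ≤ k - 2)
    (r : ℕ → Fin 4 → ℝ)
    (hr : ∀ j, r j = ![(j : ℝ) / n, ((j : ℝ) / n) ^ 2, ((j : ℝ) / n) ^ 3,
      if k ≤ j then 1 else 0]) :
    ∃ (a : Fin 4 → ℝ) (b : ℝ), a ≠ 0 ∧
      (∀ j ∈ ({0, i, i + 1, k} : Finset ℕ), ∑ l, a l * r j l = b) ∧
      ((∀ x ≤ n, x ∉ ({0, i, i + 1, k} : Finset ℕ) → ∑ l, a l * r x l < b) ∨
        (∀ x ≤ n, x ∉ ({0, i, i + 1, k} : Finset ℕ) → b < ∑ l, a l * r x l)) := by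
  have hik' : i + 2 ≤ k := by omega
  have hnR : (0:ℝ) < n := by exact_mod_cast (by omega : 0 < n)
  have hn0 : (n:ℝ) ≠ 0 := ne_of_gt hnR
  set a : Fin 4 → ℝ := ![-(i:ℝ)*((i:ℝ)+1), (2*(i:ℝ)+1)*n, -(n:ℝ)^2,
    (k:ℝ)*((k:ℝ)-i)*((k:ℝ)-i-1)/n] with ha
  have key : ∀ j : ℕ, ∑ l, a l * r j l =
      (-(j:ℝ)*((j:ℝ)-i)*((j:ℝ)-i-1)
        + (if k ≤ j then (k:ℝ)*((k:ℝ)-i)*((k:ℝ)-i-1) else 0))/n := by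
    intro j
    rw [hr, Fin.sum_univ_four]
    simp only [ha, Matrix.cons_val_zero, Matrix.cons_val_one, Matrix.head_cons,
      Matrix.cons_val_two, Matrix.tail_cons, Matrix.cons_val_three]
    split_ifs <;> field_simp <;> ring
  refine ⟨a, 0, ?_, ?_, Or.inl ?_⟩
  · intro h
    have h2 := congrFun h 2
    simp only [ha, Matrix.cons_val_two, Matrix.tail_cons, Matrix.head_cons,
      Pi.zero_apply] at h2
    nlinarith
  · intro j hj
    simp only [Finset.mem_insert, Finset.mem_singleton] at hj
    rcases hj with rfl | rfl | rfl | rfl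
    · rw [key, if_neg (by omega)]; push_cast; ring
    · rw [key, if_neg (by omega)]; ring
    · rw [key, if_neg (by omega)]; push_cast; ring
    · rw [key, if_pos le_rfl]; ring
  · intro x hxn hx
    simp only [Finset.mem_insert, Finset.mem_singleton, not_or] at hx
    obtain ⟨hx0, hxi, hxi1, hxk⟩ := hx
    rw [key]
    by_cases hkx : k ≤ x
    · rw [if_pos hkx]
      have h1 : (k:ℝ) + 1 ≤ x := by exact_mod_cast (by omega : k + 1 ≤ x)
      have h2 : (i:ℝ) + 2 ≤ k := by exact_mod_cast hik'
      have h3 : (1:ℝ) ≤ i := by exact_mod_cast hi1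
      apply div_neg_of_neg_of_pos _ hnR
      have hQ : (0:ℝ) < ((x:ℝ) - k) * (((x:ℝ)-i)^2 + ((x:ℝ)-i)*((k:ℝ)-i)
          + ((k:ℝ)-i)^2 + ((i:ℝ)-1)*(((x:ℝ)-i)+((k:ℝ)-i)) - i) := by
        apply mul_pos (by linarith)
        nlinarith [mul_nonneg (by linarith : (0:ℝ) ≤ (i:ℝ)-1)
          (by linarith : (0:ℝ) ≤ ((x:ℝ)-i)+((k:ℝ)-i)-5)]
      nlinarith [hQ]
    · rw [if_neg hkx]
      apply div_neg_of_neg_of_pos _ hnR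
      rcases (by omega : x + 1 ≤ i ∨ i + 2 ≤ x) with hcase | hcase
      · have h1 : (x:ℝ) + 1 ≤ i := by exact_mod_cast hcase
        have h2 : (1:ℝ) ≤ x := by exact_mod_cast (by omega : 1 ≤ x)
        nlinarith [mul_pos (mul_pos (by linarith : (0:ℝ) < (x:ℝ))
          (by linarith : (0:ℝ) < (i:ℝ)-x)) (by linarith : (0:ℝ) < (i:ℝ)+1-x)]
      · have h1 : (i:ℝ) + 2 ≤ x := by exact_mod_cast hcase
        have h3 : (1:ℝ) ≤ i := by exact_mod_cast hi1
        nlinarith [mul_pos (mul_pos (by linarith : (0:ℝ) < (x:ℝ))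
          (by linarith : (0:ℝ) < (x:ℝ)-i)) (by linarith : (0:ℝ) < (x:ℝ)-i-1)]
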